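/- arXiv:2503.19432 — 4 statements merged into one kernel-verified Lean document; each statement's English description precedes it below -/
import Mathlib

section
/- Let n ≥ 2 and u ∈ ℤ^{nd}. Given an n-particle cube Λ_L^{(n)}(u), there exists a finite collection of n-particle cubes {Λ_{A(n,L)}^{(n)}(u^i)}, i = 1,…,K(u,n,L), of radius A(n,L) ≤ 2n(L+r₀), with K(u,n,L) ≤ n^n, such that if v ∉ ∪_{i=1}^{K(u,n,L)} Λ_{A(n,L)}^{(n)}(u^i), then the pair of cubes Λ_L^{(n)}(u) and Λ_L^{(n)}(v) is weakly separable. -/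
open MeasureTheory ProbabilityTheory

namespace MP

/-- A point of the single-particle lattice `ℤ^d`. -/
abbrev Pt (d : ℕ) := Fin d → ℤ

/-- A configuration of `n` particles in `ℤ^d`, i.e. a point of `ℤ^{nd}`. -/
abbrev Cfg (n d : ℕ) := Fin n → Pt d

/-- The max-norm `‖x‖ = max_i |x_i|` on `ℤ^d`. -/
def ptNorm {d : ℕ} (x : Pt d) : ℕ := Finset.univ.sup fun i => (x i).natAbs

/-- The max-norm `‖x‖ = max_j ‖x_j‖` on `ℤ^{nd}`. -/
def cfgNorm {n d : ℕ} (x : Cfg n d) : ℕ := Finset.univ.sup fun j => ptNorm (x j)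

/-- `⟨x⟩ = max {1, ‖x‖}`. -/
def jap {n d : ℕ} (x : Cfg n d) : ℕ := max 1 (cfgNorm x)

/-- The `n`-particle cube of radius `L` centered at `u`. -/
noncomputable def cube {n d : ℕ} (L : ℕ) (u : Cfg n d) : Finset (Cfg n d) :=
  Finset.Icc (fun j i => u j i - (L : ℤ)) (fun j i => u j i + (L : ℤ))

/-- Partial projection `Π_J Λ = ∪_{j∈J} Π_j Λ ⊆ ℤ^d`. -/
def projJ {n d : ℕ} (J : Finset (Fin n)) (Λ : Finset (Cfg n d)) : Finset (Pt d) :=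
  J.biUnion fun j => Λ.image fun x => x j

/-- Full projection `ΠΛ = ∪_{j=1}^n Π_j Λ ⊆ ℤ^d`. -/
def projFull {n d : ℕ} (Λ : Finset (Cfg n d)) : Finset (Pt d) := projJ Finset.univ Λ

/-- Weak separability of the pair of `n`-particle cubes `Λ_L(u)`, `Λ_L(v)`. -/
def WeaklySeparable {n d : ℕ} (r0 L : ℕ) (u v : Cfg n d) : Prop :=
  ∃ J : Finset (Fin n), J.Nonempty ∧
    (projJ J (cube (L + r0) u) ∩
        (projJ Jᶜ (cube (L + r0) u) ∪ projFull (cube (L + r0) v)) = ∅ ∨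
      projJ J (cube (L + r0) v) ∩
        (projJ Jᶜ (cube (L + r0) v) ∪ projFull (cube (L + r0) u)) = ∅)

/-- Separability: weak separability together with `‖u - v‖ > 11 n L`. -/
def Separable {n d : ℕ} (r0 L : ℕ) (u v : Cfg n d) : Prop :=
  WeaklySeparable r0 L u v ∧ 11 * n * L < cfgNorm (u - v)

/-- Complete separability: disjoint full projections of the `(L+r₀)`-cubes. -/
def CompletelySeparable {n d : ℕ} (r0 L : ℕ) (u v : Cfg n d) : Prop :=
  projFull (cube (L + r0) u) ∩ projFull (cube (L + r0) v) = ∅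

/-- Distance `dist(u, 𝔻₀) = min_{x ∈ ℤ^d} max_j ‖u_j - x‖` to the diagonal. -/
noncomputable def diagDist {n d : ℕ} (u : Cfg n d) : ℕ :=
  sInf {m : ℕ | ∃ x : Pt d, ∀ j, ptNorm (u j - x) ≤ m}

/-- Fully interactive cube. -/
def IsFI {n d : ℕ} (r0 L : ℕ) (u : Cfg n d) : Prop := diagDist u ≤ 2 * n * (L + r0)

/-- Partially interactive cube. -/
def IsPI {n d : ℕ} (r0 L : ℕ) (u : Cfg n d) : Prop := ¬ IsFI r0 L u

/-- The power-law long-range hopping kernel (Assumption A):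
`T(x,y) = ⟨y_j - x_j⟩^{-r}` if `x_i = y_i` for all `i ≠ j`, and `0` otherwise. -/
noncomputable def hopT {n d : ℕ} (r : ℝ) (x y : Cfg n d) : ℝ :=
  if h : ∃ j, ∀ i, i ≠ j → x i = y i then
    ((max 1 (ptNorm (y h.choose - x h.choose)) : ℕ) : ℝ) ^ (-r)
  else 0

/-- The total interaction `U(x) = ∑_{j₁ < j₂} U(x_{j₁}, x_{j₂})` (Assumption B). -/
def pairU {n d : ℕ} (U : Pt d → Pt d → ℝ) (x : Cfg n d) : ℝ :=
  ∑ p ∈ Finset.univ.filter (fun p : Fin n × Fin n => p.1 < p.2), U (x p.1) (x p.2)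

/-- The `n`-particle Hamiltonian kernel
`H(x,y) = g⁻¹ (T(x,y) + δ_{xy} U(x)) + δ_{xy} ∑_j v(x_j)`
for a fixed realization `v : ℤ^d → ℝ` of the potential. -/
noncomputable def ham {n d : ℕ} (g r : ℝ) (U : Pt d → Pt d → ℝ) (v : Pt d → ℝ)
    (x y : Cfg n d) : ℝ :=
  (1 / g) * (hopT r x y + if x = y then pairU U x else 0) +
    (if x = y then ∑ j, v (x j) else 0)

/-- `G` is the Green's function `(H_Λ - E)⁻¹` of the restriction of `H` to `Λ`
with Dirichlet boundary conditions. -/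
def IsGreen {n d : ℕ} (Λ : Finset (Cfg n d)) (H : Cfg n d → Cfg n d → ℝ) (E : ℝ)
    (G : Cfg n d → Cfg n d → ℝ) : Prop :=
  (∀ x y, (x ∉ Λ ∨ y ∉ Λ) → G x y = 0) ∧
  (∀ x ∈ Λ, ∀ y ∈ Λ,
    ∑ z ∈ Λ, (H x z - if x = z then E else 0) * G z y = if x = y then 1 else 0) ∧
  (∀ x ∈ Λ, ∀ y ∈ Λ,
    ∑ z ∈ Λ, G x z * (H z y - if z = y then E else 0) = if x = y then 1 else 0)

/-- `E` belongs to the spectrum of `H_Λ`, i.e. `H_Λ - E` is not invertible. -/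
def SingE {n d : ℕ} (Λ : Finset (Cfg n d)) (H : Cfg n d → Cfg n d → ℝ) (E : ℝ) : Prop :=
  ¬ ∃ G, IsGreen Λ H E G

/-- Sobolev norm of a kernel supported on `Λ × Λ`:
`‖K‖_s² = C₀ ∑_{v} (sup_{x-y=v} |K(x,y)|)² ⟨v⟩^{2s}`. -/
noncomputable def sobNorm {n d : ℕ} (C0 : ℝ) (Λ : Finset (Cfg n d))
    (K : Cfg n d → Cfg n d → ℝ) (s : ℝ) : ℝ :=
  Real.sqrt (C0 * ∑ v ∈ (Λ ×ˢ Λ).image (fun p => p.1 - p.2),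
    ((((Λ ×ˢ Λ).filter (fun p => p.1 - p.2 = v)).sup
        (fun p => ‖K p.1 p.2‖₊) : NNReal) : ℝ) ^ 2 * ((jap v : ℕ) : ℝ) ^ (2 * s))

/-- `Λ` (a cube of radius `L`) is `(E,δ)`-nonsingular: the Green's function exists and
`‖G_Λ(E)‖_s ≤ L^{τ + δ s}` for all `s ∈ [s₀, r_n]`. -/
def IsNS {n d : ℕ} (C0 τ δ s0 rn : ℝ) (L : ℕ) (Λ : Finset (Cfg n d))
    (H : Cfg n d → Cfg n d → ℝ) (E : ℝ) : Prop :=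
  ∃ G, IsGreen Λ H E G ∧
    ∀ s : ℝ, s0 ≤ s → s ≤ rn → sobNorm C0 Λ G s ≤ (L : ℝ) ^ (τ + δ * s)

/-- `Λ` (a cube of radius `L`) is `E`-resonant: `dist(E, σ(H_Λ)) < L^{-β}`. -/
def IsER {n d : ℕ} (β : ℝ) (L : ℕ) (Λ : Finset (Cfg n d))
    (H : Cfg n d → Cfg n d → ℝ) (E : ℝ) : Prop :=
  ∃ E' : ℝ, SingE Λ H E' ∧ |E - E'| < (L : ℝ) ^ (-β)

/-- The scales `L_k = L₀^{4^k}`. -/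
def Lscale (L0 k : ℕ) : ℕ := L0 ^ (4 ^ k)

/-- `p^{(m)} = 18^{N-m} p₀`. -/
def pexp (N : ℕ) (p0 : ℝ) (m : ℕ) : ℝ := 18 ^ (N - m) * p0

/-- The energy interval `I = [-MN-1, MN+1]`. -/
def Ibox (M : ℝ) (N : ℕ) : Set ℝ := Set.Icc (-(M * N) - 1) (M * N + 1)

/-- Property `(SS.N.I.k.n)` at scale `Lk`: for every pair of separable `n`-particle
cubes of radius `Lk`, the probability that for some `E ∈ I` both cubes are
`(E,1/2)`-singular is `< Lk^{-2 p^{(n)}}`. -/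
def SSprop {d : ℕ} (n : ℕ) {Ω : Type} [MeasurableSpace Ω] (P : Measure Ω)
    (V : Pt d → Ω → ℝ) (g r : ℝ) (U : Pt d → Pt d → ℝ) (C0 : ℝ)
    (τ s0 rn : ℝ) (I : Set ℝ) (r0 Lk : ℕ) (pn : ℝ) : Prop :=
  ∀ u v : Cfg n d, Separable r0 Lk u v →
    P {ω | ∃ E ∈ I,
        ¬ IsNS C0 τ (1/2) s0 rn Lk (cube Lk u) (ham g r U fun a => V a ω) E ∧
        ¬ IsNS C0 τ (1/2) s0 rn Lk (cube Lk v) (ham g r U fun a => V a ω) E} <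
      ENNReal.ofReal ((Lk : ℝ) ^ (-(2 * pn)))

/-- The cube `Λ_{Lk1}(u)` is `(1/2, I)`-tunneling: it contains two separable
`(E,1/2)`-singular cubes of radius `Lk` for some `E ∈ I`. -/
def IsT {n d : ℕ} (C0 τ s0 rn : ℝ) (I : Set ℝ) (g r : ℝ) (U : Pt d → Pt d → ℝ)
    (v : Pt d → ℝ) (r0 Lk Lk1 : ℕ) (u : Cfg n d) : Prop :=
  ∃ E ∈ I, ∃ x y : Cfg n d,
    cube Lk x ⊆ cube Lk1 u ∧ cube Lk y ⊆ cube Lk1 u ∧ Separable r0 Lk x y ∧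
    ¬ IsNS C0 τ (1/2) s0 rn Lk (cube Lk x) (ham g r U v) E ∧
    ¬ IsNS C0 τ (1/2) s0 rn Lk (cube Lk y) (ham g r U v) E

/-- Restriction of a kernel to `Λ × Λ`. -/
def restrictKer {n d : ℕ} (Λ : Finset (Cfg n d)) (K : Cfg n d → Cfg n d → ℝ) :
    Cfg n d → Cfg n d → ℝ :=
  fun x y => if x ∈ Λ ∧ y ∈ Λ then K x y else 0

/-- Continuity modulus `ς(ε) = sup_t (μ(t+ε] - μ(t])` of the distribution function of `μ`. -/
noncomputable def contMod (μ : Measure ℝ) (ε : ℝ) : ℝ :=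
  ⨆ t : ℝ, (μ (Set.Ioc t (t + ε))).toReal

lemma ptNorm_le_iff {d : ℕ} (x : Pt d) (m : ℕ) :
    ptNorm x ≤ m ↔ ∀ i, (x i).natAbs ≤ m := by
  simp [ptNorm, Finset.sup_le_iff]

lemma ptNorm_triangle {d : ℕ} (a b c : Pt d) :
    ptNorm (a - c) ≤ ptNorm (a - b) + ptNorm (b - c) := by
  rw [ptNorm_le_iff]
  intro i
  have h1 : ((a - b) i).natAbs ≤ ptNorm (a - b) :=
    Finset.le_sup (f := fun i => ((a - b) i).natAbs) (Finset.mem_univ i)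
  have h2 : ((b - c) i).natAbs ≤ ptNorm (b - c) :=
    Finset.le_sup (f := fun i => ((b - c) i).natAbs) (Finset.mem_univ i)
  simp only [Pi.sub_apply] at h1 h2 ⊢
  omega

lemma mem_cube {n d : ℕ} {L : ℕ} {c x : Cfg n d} :
    x ∈ cube L c ↔ ∀ j, ptNorm (x j - c j) ≤ L := by
  simp only [cube, Finset.mem_Icc, Pi.le_def, ptNorm_le_iff, Pi.sub_apply]
  constructor
  · rintro ⟨h1, h2⟩ j i
    have := h1 j i; have := h2 j i; omega
  · intro h
    constructor <;> intro j i <;> (have := h j i; omega)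

lemma aux_div (a b t : ℕ) (hb : 1 ≤ b) (h1 : b * t < a) (h2 : a ≤ b * t + b) :
    (a + (b - 1)) / b = t + 1 := by
  have e1 : (t + 1) * b = b * t + b := by ring
  have e2 : (t + 1 + 1) * b = b * t + b + b := by ring
  apply Nat.div_eq_of_lt_le
  · rw [e1]; generalize b * t = X at h1 h2 ⊢; omega
  · rw [e2]; generalize b * t = X at h1 h2 ⊢; omega

/-- Lemma 2.2(a): a finite collection of at most `n^n` cubes of radius
`A(n,L) ≤ 2n(L+r₀)` covers all centers `v` for which `Λ_L(u)`, `Λ_L(v)` may fail to be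
weakly separable. -/
theorem statement1 {n d : ℕ} (hn : 2 ≤ n) (hd : 1 ≤ d) (r0 : ℕ) (hr0 : 1 ≤ r0)
    (L : ℕ) (u : Cfg n d) :
    ∃ (K A : ℕ) (w : Fin K → Cfg n d), K ≤ n ^ n ∧ A ≤ 2 * n * (L + r0) ∧
      ∀ v : Cfg n d, (∀ i : Fin K, v ∉ cube A (w i)) → WeaklySeparable r0 L u v := by
  classical
  set R := L + r0 with hR
  have hR1 : 1 ≤ R := by omega
  refine ⟨n ^ n, 2 * n * R, fun i j => u (finFunctionFinEquiv.symm i j),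
    le_refl _, le_refl _, ?_⟩
  intro v hv
  have hne : (Finset.univ : Finset (Fin n)).Nonempty :=
    ⟨⟨0, by omega⟩, Finset.mem_univ _⟩
  set f : Fin n → ℕ := fun j => Finset.univ.inf' hne (fun k => ptNorm (v j - u k))
    with hf
  -- basic properties of f
  have hf_le : ∀ j k, f j ≤ ptNorm (v j - u k) := fun j k =>
    Finset.inf'_le _ (Finset.mem_univ k)
  have hf_ex : ∀ j, ∃ k, f j = ptNorm (v j - u k) := by
    intro j
    obtain ⟨k, -, hk⟩ := Finset.exists_mem_eq_inf' hne (fun k => ptNorm (v j - u k))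
    exact ⟨k, hk⟩
  -- there is j0 far from u
  have hbig : ∃ j0, 2 * R * n < f j0 := by
    by_contra h
    push_neg at h
    choose σ hσ using hf_ex
    apply hv (finFunctionFinEquiv σ)
    rw [mem_cube]
    intro j
    have hb : (fun (i : Fin (n ^ n)) (j : Fin n) => u (finFunctionFinEquiv.symm i j))
        (finFunctionFinEquiv σ) j = u (σ j) := by
      simp
    rw [hb, ← hσ j]
    calc f j ≤ 2 * R * n := h j
      _ = 2 * n * R := by ring
  obtain ⟨j0, hj0⟩ := hbig
  -- pigeonhole: find an empty annulus
  set T : Finset ℕ :=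
    (Finset.univ.filter (fun j : Fin n => f j ≤ 2 * R * n)).image
      (fun j => (f j + (2 * R - 1)) / (2 * R)) with hT
  have hTcard : T.card < (Finset.Icc 1 n).card := by
    have h1 : T.card ≤ (Finset.univ.filter (fun j : Fin n => f j ≤ 2 * R * n)).card :=
      Finset.card_image_le
    have h2 : (Finset.univ.filter (fun j : Fin n => f j ≤ 2 * R * n)) ⊆
        Finset.univ.erase j0 := by
      intro j hj
      rw [Finset.mem_filter] at hj
      refine Finset.mem_erase.2 ⟨?_, Finset.mem_univ _⟩
      rintro rfl; omega
    have h3 := Finset.card_le_card h2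
    rw [Finset.card_erase_of_mem (Finset.mem_univ _)] at h3
    simp only [Finset.card_univ, Fintype.card_fin] at h3
    rw [Nat.card_Icc]
    omega
  have hex : ∃ t₀ ∈ Finset.Icc 1 n, t₀ ∉ T := by
    by_contra h
    push_neg at h
    exact absurd (Finset.card_le_card h) (by omega)
  obtain ⟨t₀, ht₀S, ht₀T⟩ := hex
  rw [Finset.mem_Icc] at ht₀S
  obtain ⟨t₁, rfl⟩ : ∃ t₁, t₀ = t₁ + 1 := ⟨t₀ - 1, by omega⟩
  -- the annulus (2R t₁, 2R(t₁+1)] contains no f j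
  have hgap : ∀ j : Fin n, f j ≤ 2 * R * (t₁ + 1) → f j ≤ 2 * R * t₁ := by
    intro j hj
    by_contra hc
    push_neg at hc
    apply ht₀T
    rw [hT]
    refine Finset.mem_image.2 ⟨j, Finset.mem_filter.2 ⟨Finset.mem_univ _, ?_⟩, ?_⟩
    · calc f j ≤ 2 * R * (t₁ + 1) := hj
        _ ≤ 2 * R * n := Nat.mul_le_mul_left _ (by omega)
    · have e : 2 * R * t₁ + 2 * R = 2 * R * (t₁ + 1) := by ring
      exact aux_div _ _ _ (by omega) hc (by omega)
  -- the set J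
  set J : Finset (Fin n) :=
    Finset.univ.filter (fun j => 2 * R * (t₁ + 1) < f j) with hJ
  have hJne : J.Nonempty := by
    refine ⟨j0, Finset.mem_filter.2 ⟨Finset.mem_univ _, ?_⟩⟩
    calc 2 * R * (t₁ + 1) ≤ 2 * R * n := Nat.mul_le_mul_left _ (by omega)
      _ < f j0 := hj0
  refine ⟨J, hJne, Or.inr ?_⟩
  rw [Finset.eq_empty_iff_forall_notMem]
  intro x hx
  rw [Finset.mem_inter, Finset.mem_union] at hx
  obtain ⟨hx1, hx2⟩ := hx
  -- x close to v j for some j ∈ J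
  obtain ⟨j, hjJ, y, hy, hyx⟩ : ∃ j ∈ J, ∃ y ∈ cube (L + r0) v, y j = x := by
    simpa [projJ] using hx1
  have hjf : 2 * R * (t₁ + 1) < f j := (Finset.mem_filter.1 hjJ).2
  have hxvj : ptNorm (x - v j) ≤ R := by
    rw [← hyx]; exact mem_cube.1 hy j
  -- key bound: ptNorm (v j - z) ≤ R leads to contradiction in both cases
  cases hx2 with
  | inl h =>
    obtain ⟨k, hkJ, z, hz, hzx⟩ : ∃ k ∈ Jᶜ, ∃ z ∈ cube (L + r0) v, z k = x := by
      simpa [projJ] using h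
    have hkJ' : k ∉ J := Finset.mem_compl.1 hkJ
    have hkf : f k ≤ 2 * R * t₁ := by
      apply hgap
      by_contra hc
      exact hkJ' (Finset.mem_filter.2 ⟨Finset.mem_univ _, by omega⟩)
    have hxvk : ptNorm (x - v k) ≤ R := by
      rw [← hzx]; exact mem_cube.1 hz k
    -- ptNorm (v j - v k) ≤ 2R, but f j ≤ ptNorm (v j - v k) + f k ≤ 2R + 2R t₁
    have hjk : ptNorm (v j - v k) ≤ 2 * R := by
      calc ptNorm (v j - v k) ≤ ptNorm (v j - x) + ptNorm (x - v k) :=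
            ptNorm_triangle _ _ _
        _ ≤ R + R := by
            refine Nat.add_le_add ?_ hxvk
            rw [ptNorm_le_iff] at hxvj ⊢
            intro i
            have := hxvj i
            simp only [Pi.sub_apply] at this ⊢
            omega
        _ = 2 * R := by ring
    obtain ⟨k', hk'⟩ := hf_ex k
    have : f j ≤ ptNorm (v j - v k) + f k := by
      calc f j ≤ ptNorm (v j - u k') := hf_le j k'
        _ ≤ ptNorm (v j - v k) + ptNorm (v k - u k') := ptNorm_triangle _ _ _
        _ = ptNorm (v j - v k) + f k := by rw [hk']
    have e : 2 * R * (t₁ + 1) = 2 * R * t₁ + 2 * R := by ring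
    generalize hX : 2 * R * t₁ = X at *
    omega
  | inr h =>
    obtain ⟨k, -, z, hz, hzx⟩ : ∃ k ∈ (Finset.univ : Finset (Fin n)),
        ∃ z ∈ cube (L + r0) u, z k = x := by
      simpa [projFull, projJ] using h
    have hxuk : ptNorm (x - u k) ≤ R := by
      rw [← hzx]; exact mem_cube.1 hz k
    have hju : ptNorm (v j - u k) ≤ 2 * R := by
      calc ptNorm (v j - u k) ≤ ptNorm (v j - x) + ptNorm (x - u k) :=
            ptNorm_triangle _ _ _
        _ ≤ R + R := by
            refine Nat.add_le_add ?_ hxuk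
            rw [ptNorm_le_iff] at hxvj ⊢
            intro i
            have := hxvj i
            simp only [Pi.sub_apply] at this ⊢
            omega
        _ = 2 * R := by ring
    have h1 : f j ≤ 2 * R := le_trans (hf_le j k) hju
    have h2 : 2 * R ≤ 2 * R * (t₁ + 1) := Nat.le_mul_of_pos_right _ (by omega)
    omega

end MP
end

section
/- If an n-particle cube Λ_L^{(n)}(u) is partially interactive (PI), then there exist two complementary non-empty index subsets J, J^C ⊂ {1,…,n} such that Π_J Λ_{L+r₀}^{(n)}(u) ∩ Π_{J^C} Λ_{L+r₀}^{(n)}(u) = ∅. -/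
open MeasureTheory ProbabilityTheory

namespace MP

/-- a PI cube admits two complementary nonempty index sets with disjoint
partial projections of the `(L+r₀)`-enlarged cube. -/
theorem statement3 {n d : ℕ} (hn : 1 ≤ n) (hd : 1 ≤ d) (r0 : ℕ) (hr0 : 1 ≤ r0)
    (L : ℕ) (u : Cfg n d) (hPI : IsPI r0 L u) :
    ∃ J : Finset (Fin n), J.Nonempty ∧ Jᶜ.Nonempty ∧
      projJ J (cube (L + r0) u) ∩ projJ Jᶜ (cube (L + r0) u) = ∅ := by
  classical
  haveI : NeZero n := ⟨by omega⟩
  set R : ℕ := L + r0 with hRdef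
  have hR1 : 1 ≤ R := by omega
  set M : ℕ := n * R with hMdef
  -- Step A: there is a coordinate with large spread
  have hspread : ∃ i : Fin d, ∃ j k : Fin n, ((4 * M : ℕ) : ℤ) < u k i - u j i := by
    by_contra hcon
    push_neg at hcon
    refine hPI ?_
    have hbound : ∀ (j : Fin n) (i : Fin d),
        (u j i - ((Finset.univ.inf' Finset.univ_nonempty fun j' => u j' i)
          + ((2 * M : ℕ) : ℤ))).natAbs ≤ 2 * M := by
      intro j i
      obtain ⟨k, -, hk⟩ := Finset.exists_mem_eq_inf' Finset.univ_nonempty (fun j' => u j' i)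
      have h1 : (Finset.univ.inf' Finset.univ_nonempty fun j' => u j' i) ≤ u j i :=
        Finset.inf'_le _ (Finset.mem_univ j)
      have h2 : u j i - u k i ≤ ((4 * M : ℕ) : ℤ) := hcon i k j
      omega
    have hmem : 2 * M ∈ {m : ℕ | ∃ x : Pt d, ∀ j, ptNorm (u j - x) ≤ m} := by
      refine ⟨fun i => (Finset.univ.inf' Finset.univ_nonempty fun j' => u j' i)
        + ((2 * M : ℕ) : ℤ), fun j => ?_⟩
      refine Finset.sup_le fun i _ => ?_
      simpa [Pi.sub_apply] using hbound j i
    have hle : diagDist u ≤ 2 * M := Nat.sInf_le hmem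
    unfold IsFI
    calc diagDist u ≤ 2 * M := hle
      _ = 2 * n * (L + r0) := by rw [hMdef, hRdef]; ring
  obtain ⟨i0, j0, k0, hjk⟩ := hspread
  set a : Fin n → ℤ := fun j => u j i0 with ha
  obtain ⟨jm, -, hjm⟩ := Finset.exists_mem_eq_inf' Finset.univ_nonempty a
  set m0 : ℤ := Finset.univ.inf' Finset.univ_nonempty a with hm0
  -- Step B: find a gap
  set cnt : ℕ → ℕ := fun s =>
    (Finset.univ.filter (fun j => a j ≤ m0 + (2 * (R : ℤ) + 1) * s)).card with hcnt
  have hmono : ∀ s t : ℕ, s ≤ t → cnt s ≤ cnt t := by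
    intro s t hst
    apply Finset.card_le_card
    intro j hj
    rw [Finset.mem_filter] at hj ⊢
    refine ⟨hj.1, le_trans hj.2 ?_⟩
    have : ((s : ℤ)) ≤ (t : ℤ) := by exact_mod_cast hst
    nlinarith [hj.2]
  have key : ∃ s < n, cnt s = cnt (s + 1) := by
    by_contra hk
    push_neg at hk
    have grow : ∀ s, s ≤ n → s + 1 ≤ cnt s := by
      intro s hs
      induction s with
      | zero =>
        have hjm' : jm ∈ Finset.univ.filter (fun j => a j ≤ m0 + (2 * (R : ℤ) + 1) * (0:ℕ)) := by
          rw [Finset.mem_filter]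
          exact ⟨Finset.mem_univ _, by simpa using le_of_eq hjm.symm⟩
        have := Finset.card_pos.mpr ⟨jm, hjm'⟩
        simpa [hcnt] using this
      | succ s ih =>
        have h1 : s + 1 ≤ cnt s := ih (by omega)
        have h2 : cnt s ≠ cnt (s + 1) := hk s (by omega)
        have h3 : cnt s ≤ cnt (s + 1) := hmono s (s + 1) (by omega)
        omega
    have h4 : cnt n ≤ n := by
      calc cnt n ≤ (Finset.univ : Finset (Fin n)).card := Finset.card_filter_le _ _
        _ = n := by simp
    have := grow n le_rfl
    omega
  obtain ⟨s, hsn, hs⟩ := key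
  set c1 : ℤ := m0 + (2 * (R : ℤ) + 1) * s with hc1
  set c2 : ℤ := m0 + (2 * (R : ℤ) + 1) * (s + 1 : ℕ) with hc2
  have hc21 : c2 = c1 + 2 * (R : ℤ) + 1 := by rw [hc1, hc2]; push_cast; ring
  have hsub : Finset.univ.filter (fun j => a j ≤ c1) ⊆ Finset.univ.filter (fun j => a j ≤ c2) := by
    intro j hj
    rw [Finset.mem_filter] at hj ⊢
    exact ⟨hj.1, by omega⟩
  have heq : Finset.univ.filter (fun j => a j ≤ c1) = Finset.univ.filter (fun j => a j ≤ c2) :=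
    Finset.eq_of_subset_of_card_le hsub (le_of_eq hs.symm)
  set J : Finset (Fin n) := Finset.univ.filter (fun j => a j ≤ c1) with hJ
  -- separation property
  have hsep : ∀ k : Fin n, k ∉ J → c1 + 2 * (R : ℤ) + 2 ≤ a k := by
    intro k hkJ
    rw [hJ, Finset.mem_filter] at hkJ
    push_neg at hkJ
    have h1 : c1 < a k := hkJ (Finset.mem_univ k)
    have h2 : c2 < a k := by
      by_contra h
      push_neg at h
      have : k ∈ Finset.univ.filter (fun j => a j ≤ c2) :=
        Finset.mem_filter.mpr ⟨Finset.mem_univ k, h⟩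
      rw [← heq, Finset.mem_filter] at this
      exact absurd this.2 (not_le.mpr h1)
    omega
  -- J nonempty
  have hm0le : ∀ j, m0 ≤ a j := fun j => by
    rw [hm0]; exact Finset.inf'_le _ (Finset.mem_univ j)
  have hJne : J.Nonempty := by
    refine ⟨jm, Finset.mem_filter.mpr ⟨Finset.mem_univ _, ?_⟩⟩
    rw [hc1, ← hjm]
    have hpos : (0:ℤ) ≤ (2 * (R:ℤ) + 1) * s :=
      mul_nonneg (by positivity) (Nat.cast_nonneg s)
    linarith
  -- Jᶜ nonempty : k0 ∉ J
  have hk0 : k0 ∉ J := by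
    rw [hJ, Finset.mem_filter]
    rintro ⟨-, hle⟩
    -- a k0 > a j0 + 4M ≥ m0 + 4M, but c1 ≤ m0 + 4M
    have h1 : m0 + ((4 * M : ℕ) : ℤ) < a k0 := by
      have := hm0le j0
      have := hjk
      simp only [ha] at *
      omega
    have h2 : c1 ≤ m0 + ((4 * M : ℕ) : ℤ) := by
      rw [hc1, hMdef]
      have hs' : (s : ℤ) ≤ (n : ℤ) - 1 := by
        have : (s : ℤ) < (n : ℤ) := by exact_mod_cast hsn
        omega
      have hr' : (1 : ℤ) ≤ (R : ℤ) := by exact_mod_cast hR1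
      have hn' : (1 : ℤ) ≤ (n : ℤ) := by exact_mod_cast hn
      have hs0 : (0 : ℤ) ≤ (s : ℤ) := Nat.cast_nonneg s
      push_cast
      nlinarith
    omega
  refine ⟨J, hJne, ⟨k0, Finset.mem_compl.mpr hk0⟩, ?_⟩
  rw [Finset.eq_empty_iff_forall_notMem]
  intro y hy
  rw [Finset.mem_inter] at hy
  obtain ⟨h1, h2⟩ := hy
  rw [projJ, Finset.mem_biUnion] at h1 h2
  obtain ⟨j, hjJ, hj⟩ := h1
  obtain ⟨k, hkJ, hk⟩ := h2
  rw [Finset.mem_image] at hj hk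
  obtain ⟨x, hx, hxj⟩ := hj
  obtain ⟨z, hz, hzk⟩ := hk
  rw [cube, Finset.mem_Icc] at hx hz
  have hx1 : u j i0 - (R : ℤ) ≤ x j i0 := hx.1 j i0
  have hx2 : x j i0 ≤ u j i0 + (R : ℤ) := hx.2 j i0
  have hz1 : u k i0 - (R : ℤ) ≤ z k i0 := hz.1 k i0
  have hz2 : z k i0 ≤ u k i0 + (R : ℤ) := hz.2 k i0
  have hjc : a j ≤ c1 := (Finset.mem_filter.mp hjJ).2
  have hkc : c1 + 2 * (R : ℤ) + 2 ≤ a k := hsep k (Finset.mem_compl.mp hkJ)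
  have hyx : x j i0 = y i0 := by rw [hxj]
  have hyz : z k i0 = y i0 := by rw [hzk]
  simp only [ha] at hjc hkc
  omega

end MP
end

section
/- Assume that property (SS.N.I.k.ñ) holds for all ñ ∈ [1,n−1]. Then for every n-particle PI cube Λ_{L_{k+1}}^{(n)}(u), ℙ{Λ_{L_{k+1}}^{(n)}(u) is (1/2,I)-PT} ≤ 3^{2(n−1)d} L_{k+1}^{−p^{(n−1)}/2 + 2(n−1)d}. -/
open MeasureTheory ProbabilityTheory

namespace MP

lemma aux_two_four_nine : ∀ s : ℕ, 1 ≤ s → 2 * 4 ^ s ≤ 9 ^ s := by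
  intro s hs
  induction s with
  | zero => omega
  | succ t ih =>
    rcases Nat.eq_or_lt_of_le hs with h | h
    · simp [← h]
    · have ht : 1 ≤ t := by omega
      have := ih ht
      calc 2 * 4 ^ (t + 1) = 4 * (2 * 4 ^ t) := by ring
        _ ≤ 4 * 9 ^ t := by omega
        _ ≤ 9 * 9 ^ t := by
            have : (0:ℕ) < 9 ^ t := Nat.pow_pos (by norm_num)
            nlinarith
        _ = 9 ^ (t + 1) := by ring

lemma aux_card {n d : ℕ} (u : Cfg n d) (c : ℤ) :
    (Finset.Icc (fun j i => u j i - c) (fun j i => u j i + c) : Finset (Cfg n d)).card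
      = (2 * c + 1).toNat ^ (n * d) := by
  rw [Pi.card_Icc]
  have h1 : ∀ j : Fin n,
      (Finset.Icc (fun i => u j i - c) (fun i => u j i + c)).card = (2 * c + 1).toNat ^ d := by
    intro j
    rw [Pi.card_Icc]
    have h2 : ∀ i : Fin d, (Finset.Icc (u j i - c) (u j i + c)).card = (2 * c + 1).toNat := by
      intro i; rw [Int.card_Icc]; congr 1; ring
    rw [Finset.prod_congr rfl (fun i _ => h2 i), Finset.prod_const, Finset.card_univ,
      Fintype.card_fin]
  rw [Finset.prod_congr rfl (fun j _ => h1 j), Finset.prod_const, Finset.card_univ,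
    Fintype.card_fin, ← pow_mul, Nat.mul_comm d n]

lemma aux_center {n d : ℕ} {Lk L1 : ℕ} (u x : Cfg n d)
    (h : cube Lk x ⊆ cube L1 u) :
    x ∈ Finset.Icc (fun j i => u j i - ((L1 : ℤ) - Lk)) (fun j i => u j i + ((L1 : ℤ) - Lk)) := by
  have hne : (fun j i => x j i - (Lk : ℤ)) ≤ (fun j i => x j i + (Lk : ℤ)) := by
    intro j i
    have : (0 : ℤ) ≤ (Lk : ℤ) := Int.natCast_nonneg Lk
    simp only
    omega
  rw [cube, cube, Finset.Icc_subset_Icc_iff hne] at h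
  obtain ⟨h1, h2⟩ := h
  rw [Finset.mem_Icc]
  constructor
  · intro j i
    have := h1 j i
    simp only at this ⊢
    omega
  · intro j i
    have := h2 j i
    simp only at this ⊢
    omega

lemma cube_bound {d n : ℕ} {Ω : Type} [MeasurableSpace Ω] (P : Measure Ω)
    (V : Pt d → Ω → ℝ) (g r : ℝ) (U : Pt d → Pt d → ℝ) (C0 τ s0 rn : ℝ)
    (I : Set ℝ) (r0 Lk L1 : ℕ) (pn : ℝ) (hLk : 1 ≤ Lk) (hLkL1 : Lk ≤ L1)
    (hSS : SSprop n P V g r U C0 τ s0 rn I r0 Lk pn) (u : Cfg n d) :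
    P {ω | IsT C0 τ s0 rn I g r U (fun a => V a ω) r0 Lk L1 u} ≤
      ((((2 * L1) ^ (n * d)) ^ 2 : ℕ) : ENNReal) * ENNReal.ofReal ((Lk : ℝ) ^ (-(2 * pn))) := by
  classical
  set C : Finset (Cfg n d) :=
    Finset.Icc (fun j i => u j i - ((L1 : ℤ) - Lk)) (fun j i => u j i + ((L1 : ℤ) - Lk)) with hC
  set S : Cfg n d × Cfg n d → Set Ω := fun p => {ω | Separable r0 Lk p.1 p.2 ∧
      ∃ E ∈ I, ¬ IsNS C0 τ (1/2) s0 rn Lk (cube Lk p.1) (ham g r U fun a => V a ω) E ∧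
               ¬ IsNS C0 τ (1/2) s0 rn Lk (cube Lk p.2) (ham g r U fun a => V a ω) E} with hS
  have hsub : {ω | IsT C0 τ s0 rn I g r U (fun a => V a ω) r0 Lk L1 u} ⊆ ⋃ p ∈ C ×ˢ C, S p := by
    intro ω hω
    simp only [Set.mem_setOf_eq, IsT] at hω
    obtain ⟨E, hE, x, y, hx, hy, hsep, hnx, hny⟩ := hω
    have hmem : (x, y) ∈ C ×ˢ C :=
      Finset.mem_product.2 ⟨aux_center u x hx, aux_center u y hy⟩
    exact Set.mem_biUnion hmem ⟨hsep, E, hE, hnx, hny⟩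
  have hper : ∀ p ∈ C ×ˢ C, P (S p) ≤ ENNReal.ofReal ((Lk : ℝ) ^ (-(2 * pn))) := by
    intro p _
    by_cases hsep : Separable r0 Lk p.1 p.2
    · refine le_of_lt (lt_of_le_of_lt (measure_mono ?_) (hSS p.1 p.2 hsep))
      exact fun ω h => h.2
    · have hempty : S p ⊆ (∅ : Set Ω) := fun ω h => absurd h.1 hsep
      refine le_trans (measure_mono hempty) ?_
      simp
  have hcard : (C ×ˢ C).card ≤ ((2 * L1) ^ (n * d)) ^ 2 := by
    rw [Finset.card_product]
    have hcc : C.card = (2 * ((L1 : ℤ) - Lk) + 1).toNat ^ (n * d) := aux_card u _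
    have hle : (2 * ((L1 : ℤ) - Lk) + 1).toNat ≤ 2 * L1 := by omega
    have : C.card ≤ (2 * L1) ^ (n * d) := by
      rw [hcc]; exact Nat.pow_le_pow_left hle _
    calc C.card * C.card ≤ (2 * L1) ^ (n * d) * (2 * L1) ^ (n * d) :=
          Nat.mul_le_mul this this
      _ = ((2 * L1) ^ (n * d)) ^ 2 := (sq _).symm
  calc P {ω | IsT C0 τ s0 rn I g r U (fun a => V a ω) r0 Lk L1 u}
      ≤ P (⋃ p ∈ C ×ˢ C, S p) := measure_mono hsub
    _ ≤ ∑ p ∈ C ×ˢ C, P (S p) := measure_biUnion_finset_le _ _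
    _ ≤ ∑ _p ∈ C ×ˢ C, ENNReal.ofReal ((Lk : ℝ) ^ (-(2 * pn))) := Finset.sum_le_sum hper
    _ = ((C ×ˢ C).card : ENNReal) * ENNReal.ofReal ((Lk : ℝ) ^ (-(2 * pn))) := by
        rw [Finset.sum_const, nsmul_eq_mul]
    _ ≤ _ := by
        refine mul_le_mul_left ?_ _
        exact_mod_cast hcard

/-- Lemma 3.3: if `(SS.N.I.k.ñ)` holds for all `ñ ∈ [1,n-1]`, then for
every `n`-particle PI cube `Λ_{L_{k+1}}(u)` (with canonical decomposition
`u = (u', u'')`), the probability that it is `(1/2,I)`-partially tunneling is at most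
`3^{2(n-1)d} L_{k+1}^{-p^{(n-1)}/2 + 2(n-1)d}`. -/
theorem statement7 {d N : ℕ} (hd : 1 ≤ d) (hN : 2 ≤ N)
    (n1 n2 : ℕ) (hn1 : 1 ≤ n1) (hn2 : 1 ≤ n2) (hnN : n1 + n2 ≤ N)
    {Ω : Type} [MeasurableSpace Ω] (P : Measure Ω) [IsProbabilityMeasure P]
    (V : Pt d → Ω → ℝ) (hVmeas : ∀ a, Measurable (V a))
    (μ : Measure ℝ) [IsProbabilityMeasure μ]
    (hiid : iIndepFun V P)
    (hlaw : ∀ a, P.map (V a) = μ)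
    (M : ℝ) (hM : 0 < M) (hsupp : μ (Set.Icc (-M) M) = 1)
    (ρ κ : ℝ) (hρ : 0 < ρ) (hκ : 0 < κ)
    (hHolder : ∃ κ0 > 0, ∀ a b : ℝ, a ≤ b → b - a ≤ κ0 →
        μ (Set.Icc a b) ≤ ENNReal.ofReal (κ⁻¹ * (b - a) ^ ρ))
    (U : Pt d → Pt d → ℝ) (r0 : ℕ) (hr0 : 1 ≤ r0) (M1 : ℝ)
    (hUbdd : ∀ x x', |U x x'| ≤ M1) (hUsym : ∀ x x', U x x' = U x' x)
    (hUfin : ∀ x x', (r0 : ℕ) ≤ ptNorm (x - x') → U x x' = 0)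
    (g r C0 : ℝ) (hC0 : 0 < C0)
    (p0 : ℝ) (hp0 : 20 * N * d ≤ p0)
    (τ s0 rn : ℕ → ℝ)
    (L0 k : ℕ) (hL0 : 2 ≤ L0)
    (hSS : ∀ m, 1 ≤ m → m ≤ n1 + n2 - 1 →
        SSprop (d := d) m P V g r U C0 (τ m) (s0 m) (rn m) (Ibox M N) r0
          (Lscale L0 k) (pexp N p0 m))
    (u1 : Cfg n1 d) (u2 : Cfg n2 d)
    (hPI : IsPI r0 (Lscale L0 (k + 1)) (Fin.append u1 u2))
    (hdecomp : projFull (cube (Lscale L0 (k + 1) + r0) u1) ∩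
        projFull (cube (Lscale L0 (k + 1) + r0) u2) = ∅) :
    P {ω | IsT C0 (τ n1) (s0 n1) (rn n1) (Ibox M N) g r U (fun a => V a ω) r0
            (Lscale L0 k) (Lscale L0 (k + 1)) u1 ∨
           IsT C0 (τ n2) (s0 n2) (rn n2) (Ibox M N) g r U (fun a => V a ω) r0
            (Lscale L0 k) (Lscale L0 (k + 1)) u2} ≤
      ENNReal.ofReal ((3 : ℝ) ^ (2 * (n1 + n2 - 1) * d) *
        (Lscale L0 (k + 1) : ℝ) ^
          (-(pexp N p0 (n1 + n2 - 1)) / 2 + 2 * ((n1 + n2 - 1) * d : ℕ))) := by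
  classical
  set m := n1 + n2 - 1 with hm
  set Lk := Lscale L0 k with hLkdef
  set L1 := Lscale L0 (k + 1) with hL1def
  have hm1 : 1 ≤ m := by omega
  have hmN : m ≤ n1 + n2 - 1 := le_refl _
  have hLk1 : 1 ≤ Lk := Nat.one_le_pow _ _ (by omega)
  have hL1eq : L1 = Lk ^ 4 := by
    rw [hL1def, hLkdef, Lscale, Lscale, pow_succ, pow_mul]
  have hLkL1 : Lk ≤ L1 := by
    rw [hL1eq]; exact Nat.le_self_pow (by norm_num) Lk
  have hL11 : 1 ≤ L1 := le_trans hLk1 hLkL1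
  -- bounds for the two tunneling events
  have hb1 := cube_bound P V g r U C0 (τ n1) (s0 n1) (rn n1) (Ibox M N) r0 Lk L1
    (pexp N p0 n1) hLk1 hLkL1 (hSS n1 hn1 (by omega)) u1
  have hb2 := cube_bound P V g r U C0 (τ n2) (s0 n2) (rn n2) (Ibox M N) r0 Lk L1
    (pexp N p0 n2) hLk1 hLkL1 (hSS n2 hn2 (by omega)) u2
  -- union bound
  have hset : {ω | IsT C0 (τ n1) (s0 n1) (rn n1) (Ibox M N) g r U (fun a => V a ω) r0 Lk L1 u1 ∨
           IsT C0 (τ n2) (s0 n2) (rn n2) (Ibox M N) g r U (fun a => V a ω) r0 Lk L1 u2} =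
      {ω | IsT C0 (τ n1) (s0 n1) (rn n1) (Ibox M N) g r U (fun a => V a ω) r0 Lk L1 u1} ∪
      {ω | IsT C0 (τ n2) (s0 n2) (rn n2) (Ibox M N) g r U (fun a => V a ω) r0 Lk L1 u2} :=
    Set.setOf_or
  -- convert each bound to `ofReal` form
  have hconv : ∀ (nn : ℕ) (q : ℝ),
      ((((2 * L1) ^ (nn * d)) ^ 2 : ℕ) : ENNReal) * ENNReal.ofReal ((Lk : ℝ) ^ (-(2 * q))) =
      ENNReal.ofReal (((((2 * L1) ^ (nn * d)) ^ 2 : ℕ) : ℝ) * (Lk : ℝ) ^ (-(2 * q))) := by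
    intro nn q
    rw [ENNReal.ofReal_mul (by positivity), ENNReal.ofReal_natCast]
  -- the real-number estimate
  have hLkR0 : (0 : ℝ) < (Lk : ℝ) := by exact_mod_cast hLk1
  have hL1R1 : (1 : ℝ) ≤ (L1 : ℝ) := by exact_mod_cast hL11
  have hL1R0 : (0 : ℝ) < (L1 : ℝ) := lt_of_lt_of_le one_pos hL1R1
  have hp00 : (0 : ℝ) ≤ p0 := by
    have h20 : (0 : ℝ) ≤ 20 * N * d := by positivity
    linarith
  have hkey : ∀ q : ℝ, (Lk : ℝ) ^ (-(2 * q)) = (L1 : ℝ) ^ (-q / 2) := by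
    intro q
    have h4 : (L1 : ℝ) = (Lk : ℝ) ^ (4 : ℕ) := by rw [hL1eq]; push_cast; ring
    rw [h4, ← Real.rpow_natCast ((Lk : ℝ)) 4, ← Real.rpow_mul hLkR0.le]
    congr 1
    push_cast
    ring
  -- per-term real estimate
  have hterm : ∀ nn : ℕ, nn ≤ m →
      ((((2 * L1) ^ (nn * d)) ^ 2 : ℕ) : ℝ) * (Lk : ℝ) ^ (-(2 * pexp N p0 nn)) ≤
        (4 : ℝ) ^ (m * d) * (L1 : ℝ) ^ (-(pexp N p0 m) / 2 + 2 * ((m * d : ℕ) : ℝ)) := by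
    intro nn hnn
    have hcast : ((((2 * L1) ^ (nn * d)) ^ 2 : ℕ) : ℝ)
        = (4 : ℝ) ^ (nn * d) * ((L1 : ℝ)) ^ (2 * (nn * d)) := by
      push_cast
      rw [show (4 : ℝ) ^ (nn * d) = 2 ^ (nn * d * 2) from by
        calc (4 : ℝ) ^ (nn * d) = (2 ^ 2) ^ (nn * d) := by norm_num
          _ = 2 ^ (2 * (nn * d)) := (pow_mul 2 2 (nn * d)).symm
          _ = 2 ^ (nn * d * 2) := by ring_nf]
      ring
    rw [hcast, hkey, mul_assoc, ← Real.rpow_natCast ((L1 : ℝ)) (2 * (nn * d)),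
      ← Real.rpow_add hL1R0]
    refine mul_le_mul ?_ ?_ (Real.rpow_nonneg hL1R0.le _) (by positivity)
    · exact pow_le_pow_right₀ (by norm_num) (Nat.mul_le_mul_right d hnn)
    · apply Real.rpow_le_rpow_of_exponent_le hL1R1
      have hpm : pexp N p0 m ≤ pexp N p0 nn := by
        rw [pexp, pexp]
        have h18 : (18 : ℝ) ^ (N - m) ≤ 18 ^ (N - nn) :=
          pow_le_pow_right₀ (by norm_num) (Nat.sub_le_sub_left hnn N)
        exact mul_le_mul_of_nonneg_right h18 hp00
      have hnd : ((nn * d : ℕ) : ℝ) ≤ ((m * d : ℕ) : ℝ) := by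
        exact_mod_cast Nat.mul_le_mul_right d hnn
      push_cast at hnd ⊢
      linarith
  -- final real inequality
  have hreal : ((((2 * L1) ^ (n1 * d)) ^ 2 : ℕ) : ℝ) * (Lk : ℝ) ^ (-(2 * pexp N p0 n1)) +
      ((((2 * L1) ^ (n2 * d)) ^ 2 : ℕ) : ℝ) * (Lk : ℝ) ^ (-(2 * pexp N p0 n2)) ≤
      (3 : ℝ) ^ (2 * m * d) *
        (L1 : ℝ) ^ (-(pexp N p0 m) / 2 + 2 * ((m * d : ℕ) : ℝ)) := by
    have h1 := hterm n1 (by omega)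
    have h2 := hterm n2 (by omega)
    have hmd1 : 1 ≤ m * d := Nat.mul_le_mul hm1 hd
    have h249 : (2 : ℝ) * 4 ^ (m * d) ≤ 9 ^ (m * d) := by
      exact_mod_cast aux_two_four_nine (m * d) hmd1
    have h39 : (3 : ℝ) ^ (2 * m * d) = 9 ^ (m * d) := by
      rw [mul_assoc, pow_mul]
      norm_num
    have hpos : (0 : ℝ) ≤ (L1 : ℝ) ^ (-(pexp N p0 m) / 2 + 2 * ((m * d : ℕ) : ℝ)) :=
      Real.rpow_nonneg hL1R0.le _
    rw [h39]
    nlinarith [hpos, h249, h1, h2]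
  -- put everything together
  rw [hset]
  calc P _ ≤ _ + _ := measure_union_le _ _
    _ ≤ ENNReal.ofReal (((((2 * L1) ^ (n1 * d)) ^ 2 : ℕ) : ℝ) *
          (Lk : ℝ) ^ (-(2 * pexp N p0 n1))) +
        ENNReal.ofReal (((((2 * L1) ^ (n2 * d)) ^ 2 : ℕ) : ℝ) *
          (Lk : ℝ) ^ (-(2 * pexp N p0 n2))) :=
        add_le_add (hb1.trans_eq (hconv n1 _)) (hb2.trans_eq (hconv n2 _))
    _ = ENNReal.ofReal (((((2 * L1) ^ (n1 * d)) ^ 2 : ℕ) : ℝ) *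
          (Lk : ℝ) ^ (-(2 * pexp N p0 n1)) +
        ((((2 * L1) ^ (n2 * d)) ^ 2 : ℕ) : ℝ) *
          (Lk : ℝ) ^ (-(2 * pexp N p0 n2))) := by
        rw [ENNReal.ofReal_add (by positivity) (by positivity)]
    _ ≤ _ := ENNReal.ofReal_le_ofReal hreal

end MP
end

section
/- Let γ ≥ (1/4) n^{−1/ρ} 3^{−(2n+1)d/ρ} κ^{1/ρ} L₀^{−(2p^{(n)}+(2n+1)d)/ρ} and τ_n > (2p^{(n)}+(2n+1)d)/ρ. There exists L̄₀* = L̄₀*(n,d,κ,ρ,M,r₀,s₀^{(n)},r_n) such that if L₀ ≥ L̄₀*, there is ḡ₀* = ḡ₀*(n,d,M,r₀,s₀^{(n)},γ) so that for |g| > ḡ₀*, if the cube Λ_{L₀}^{(n)}(u) is (E,γ)-Good, then it is (E,1/2)-NS. -/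
open MeasureTheory ProbabilityTheory

namespace MP

attribute [local instance] Matrix.linftyOpNormedRing Matrix.linftyOpNormedSpace

theorem hopT_nonneg {n d : ℕ} (r : ℝ) (x y : Cfg n d) : 0 ≤ hopT r x y := by
  unfold hopT; split
  · positivity
  · exact le_refl 0

theorem hopT_le_one {n d : ℕ} {r : ℝ} (hr : 0 ≤ r) (x y : Cfg n d) : hopT r x y ≤ 1 := by
  unfold hopT; split
  · apply Real.rpow_le_one_of_one_le_of_nonpos
    · exact_mod_cast le_max_left 1 _
    · linarith
  · norm_num

theorem pairU_abs_le {n d : ℕ} (U : Pt d → Pt d → ℝ) (M1 : ℝ)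
    (hU : ∀ x x', |U x x'| ≤ M1) (x : Cfg n d) : |pairU U x| ≤ (n:ℝ)^2 * M1 := by
  have hM1 : 0 ≤ M1 := le_trans (abs_nonneg _) (hU (fun _ => 0) (fun _ => 0))
  calc |pairU U x| ≤ ∑ p ∈ Finset.univ.filter (fun p : Fin n × Fin n => p.1 < p.2), |U (x p.1) (x p.2)| :=
        Finset.abs_sum_le_sum_abs _ _
    _ ≤ (Finset.univ.filter (fun p : Fin n × Fin n => p.1 < p.2)).card • M1 :=
        Finset.sum_le_card_nsmul _ _ _ (fun p _ => hU _ _)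
    _ ≤ (n^2 : ℕ) • M1 := by
        apply nsmul_le_nsmul_left hM1
        calc (Finset.univ.filter (fun p : Fin n × Fin n => p.1 < p.2)).card
            ≤ (Finset.univ : Finset (Fin n × Fin n)).card := Finset.card_filter_le _ _
          _ = n^2 := by simp [sq]
    _ = (n:ℝ)^2 * M1 := by push_cast [nsmul_eq_mul]; ring

theorem mem_cube_self {n d : ℕ} (L : ℕ) (u : Cfg n d) : u ∈ cube L u := by
  simp only [cube, Finset.mem_Icc]
  constructor <;> intro j <;> intro i <;> simp

theorem cube_card {n d : ℕ} (L : ℕ) (u : Cfg n d) : (cube L u).card = (2*L+1)^(n*d) := by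
  unfold cube
  rw [Pi.card_Icc]
  have : ∀ j : Fin n, (Finset.Icc (fun i => u j i - (L:ℤ)) (fun i => u j i + (L:ℤ))).card = (2*L+1)^d := by
    intro j
    rw [Pi.card_Icc]
    have : ∀ i : Fin d, (Finset.Icc (u j i - (L:ℤ)) (u j i + (L:ℤ))).card = 2*L+1 := by
      intro i; rw [Int.card_Icc]; omega
    simp [this]
  simp only [this, Finset.prod_const, Finset.card_univ, Fintype.card_fin]
  rw [← pow_mul, Nat.mul_comm d n]

theorem jap_zero {n d : ℕ} : jap (0 : Cfg n d) = 1 := by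
  simp [jap, cfgNorm, ptNorm]

theorem jap_sub_le {n d : ℕ} {L : ℕ} {u x y : Cfg n d} (hx : x ∈ cube L u) (hy : y ∈ cube L u) :
    (jap (x - y) : ℝ) ≤ (2*L+1 : ℕ) := by
  have hb : jap (x - y) ≤ 2*L+1 := by
    simp only [cube, Finset.mem_Icc, Pi.le_def] at hx hy
    apply max_le (by omega)
    apply Finset.sup_le
    intro j _
    apply le_trans (le_of_eq rfl)
    apply Finset.sup_le
    intro i _
    have h1 := (hx.1 j) i
    have h2 := (hx.2 j) i
    have h3 := (hy.1 j) i
    have h4 := (hy.2 j) i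
    simp only [Pi.sub_apply]
    omega
  exact_mod_cast hb

theorem coe_sup_nnnorm_le {α : Type*} (s : Finset α) (f : α → ℝ) (b : ℝ) (hb : 0 ≤ b)
    (h : ∀ p ∈ s, |f p| ≤ b) : ((s.sup fun p => ‖f p‖₊ : NNReal) : ℝ) ≤ b := by
  rw [← Real.coe_toNNReal b hb, NNReal.coe_le_coe]
  apply Finset.sup_le
  intro p hp
  have : ‖f p‖₊ = Real.toNNReal |f p| := by
    ext; simp [Real.coe_toNNReal _ (abs_nonneg _), Real.norm_eq_abs]
  rw [this]
  exact Real.toNNReal_mono (h p hp)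

theorem entry_abs_le {ι : Type} [Fintype ι] [DecidableEq ι] (X : Matrix ι ι ℝ) (i j : ι) :
    |X i j| ≤ ‖X‖ := by
  rw [← Real.norm_eq_abs, ← coe_nnnorm, Matrix.linfty_opNorm_def]
  calc (‖X i j‖₊ : ℝ) ≤ ((∑ k, ‖X i k‖₊ : NNReal) : ℝ) := by
        push_cast
        exact Finset.single_le_sum (f := fun k => (‖X i k‖₊ : ℝ)) (fun k _ => by positivity) (Finset.mem_univ j)
    _ ≤ _ := by
        have := Finset.le_sup (f := fun i => ∑ j, ‖X i j‖₊) (Finset.mem_univ i)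
        exact_mod_cast NNReal.coe_le_coe.mpr this

theorem neumann {ι : Type} [Fintype ι] [DecidableEq ι] [Nonempty ι]
    (Dv : ι → ℝ) (A : Matrix ι ι ℝ) (γ ε : ℝ) (hγ : 0 < γ) (hε : 0 < ε)
    (hD : ∀ i, γ ≤ |Dv i|)
    (hA : ‖A‖ ≤ γ * min (1/2) (ε * γ / 2)) :
    ∃ Y : Matrix ι ι ℝ,
      (Matrix.diagonal Dv + A) * Y = 1 ∧ Y * (Matrix.diagonal Dv + A) = 1 ∧
      ∀ i j, |Y i j - (if i = j then (Dv i)⁻¹ else 0)| ≤ ε := by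
  have hDne : ∀ i, Dv i ≠ 0 := fun i h => by
    have := hD i; rw [h, abs_zero] at this; linarith
  set Di : Matrix ι ι ℝ := Matrix.diagonal (fun i => (Dv i)⁻¹) with hDi_def
  have hDDi : Matrix.diagonal Dv * Di = 1 := by
    rw [hDi_def, Matrix.diagonal_mul_diagonal, ← Matrix.diagonal_one]
    rw [show (fun i => Dv i * (Dv i)⁻¹) = fun _ : ι => (1:ℝ) from funext fun i => mul_inv_cancel₀ (hDne i)]
  have hDiD : Di * Matrix.diagonal Dv = 1 := by
    rw [hDi_def, Matrix.diagonal_mul_diagonal, ← Matrix.diagonal_one]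
    rw [show (fun i => (Dv i)⁻¹ * Dv i) = fun _ : ι => (1:ℝ) from funext fun i => inv_mul_cancel₀ (hDne i)]
  have hDinorm : ‖Di‖ ≤ γ⁻¹ := by
    rw [hDi_def, Matrix.linfty_opNorm_diagonal]
    apply pi_norm_le_iff_of_nonneg (by positivity) |>.mpr
    intro i
    rw [Real.norm_eq_abs, abs_inv]
    exact inv_anti₀ hγ (hD i)
  set B : Matrix ι ι ℝ := Di * A with hB_def
  have hBnorm : ‖B‖ ≤ min (1/2) (ε * γ / 2) := by
    calc ‖B‖ ≤ ‖Di‖ * ‖A‖ := Matrix.linfty_opNorm_mul _ _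
      _ ≤ γ⁻¹ * (γ * min (1/2) (ε * γ / 2)) := by
          apply mul_le_mul hDinorm hA (norm_nonneg _) (by positivity)
      _ = min (1/2) (ε * γ / 2) := by field_simp
  have hBhalf : ‖B‖ ≤ 1/2 := hBnorm.trans (min_le_left _ _)
  -- invertibility of 1 + B
  have hdet : (1 + B).det ≠ 0 := by
    intro hdet
    obtain ⟨w, hw, hmul⟩ := (Matrix.exists_mulVec_eq_zero_iff).mpr hdet
    have hweq : w = -(B.mulVec w) := by
      have := hmul
      rw [Matrix.add_mulVec, Matrix.one_mulVec] at this
      linear_combination (norm := module) this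
    have : ‖w‖ ≤ (1/2) * ‖w‖ := by
      calc ‖w‖ = ‖B.mulVec w‖ := by conv_lhs => rw [hweq, norm_neg]
        _ ≤ ‖B‖ * ‖w‖ := Matrix.linfty_opNorm_mulVec _ _
        _ ≤ (1/2) * ‖w‖ := by apply mul_le_mul_of_nonneg_right hBhalf (norm_nonneg _)
    have : ‖w‖ = 0 := by linarith [norm_nonneg w]
    exact hw (norm_eq_zero.mp this)
  have hunit : IsUnit (1 + B).det := isUnit_iff_ne_zero.mpr hdet
  set Y0 := (1 + B)⁻¹ with hY0_def
  have hY0l : (1 + B) * Y0 = 1 := Matrix.mul_nonsing_inv _ hunit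
  have hY0r : Y0 * (1 + B) = 1 := Matrix.nonsing_inv_mul _ hunit
  have hdecomp : Matrix.diagonal Dv + A = Matrix.diagonal Dv * (1 + B) := by
    rw [mul_add, mul_one, hB_def, ← mul_assoc, hDDi, one_mul]
  refine ⟨Y0 * Di, ?_, ?_, ?_⟩
  · rw [hdecomp, mul_assoc, ← mul_assoc (1+B), hY0l, one_mul, hDDi]
  · rw [hdecomp, mul_assoc, ← mul_assoc Di, hDiD, one_mul, hY0r]
  · intro i j
    have hY01 : Y0 - 1 = -(B * Y0) := by
      have h := hY0l
      rw [add_mul, one_mul] at h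
      linear_combination (norm := module) h
    have hY0norm : ‖Y0‖ ≤ 2 := by
      have h1 : Y0 = 1 - B * Y0 := by linear_combination (norm := module) hY01
      have : ‖Y0‖ ≤ ‖(1 : Matrix ι ι ℝ)‖ + ‖B * Y0‖ := by
        conv_lhs => rw [h1]
        exact norm_sub_le _ _
      have h2 : ‖B * Y0‖ ≤ (1/2) * ‖Y0‖ :=
        le_trans (Matrix.linfty_opNorm_mul _ _) (mul_le_mul_of_nonneg_right hBhalf (norm_nonneg _))
      rw [norm_one] at this
      linarith
    have hdiff : Y0 * Di - Di = -(B * Y0) * Di := by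
      rw [← hY01, sub_mul, one_mul]
    have hnormdiff : ‖Y0 * Di - Di‖ ≤ ε := by
      rw [hdiff, neg_mul, norm_neg]
      calc ‖B * Y0 * Di‖ ≤ ‖B * Y0‖ * ‖Di‖ := Matrix.linfty_opNorm_mul _ _
        _ ≤ (‖B‖ * ‖Y0‖) * ‖Di‖ :=
            mul_le_mul_of_nonneg_right (Matrix.linfty_opNorm_mul _ _) (norm_nonneg _)
        _ ≤ ((ε * γ / 2) * 2) * γ⁻¹ := by
            apply mul_le_mul _ hDinorm (norm_nonneg _) (by positivity)
            apply mul_le_mul (hBnorm.trans (min_le_right _ _)) hY0norm (norm_nonneg _) (by positivity)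
        _ = ε := by field_simp
    have := entry_abs_le (Y0 * Di - Di) i j
    have hij : (Y0 * Di - Di) i j = (Y0 * Di) i j - (if i = j then (Dv i)⁻¹ else 0) := by
      simp [hDi_def, Matrix.sub_apply, Matrix.diagonal_apply]
    rw [hij] at this
    exact this.trans hnormdiff

theorem norm_le_of_entries {ι : Type} [Fintype ι] [DecidableEq ι] [Nonempty ι]
    (A : Matrix ι ι ℝ) (a : ℝ) (h : ∀ i j, |A i j| ≤ a) : ‖A‖ ≤ (Fintype.card ι : ℝ) * a := by
  have ha : 0 ≤ a := le_trans (abs_nonneg _) (h (Classical.arbitrary ι) (Classical.arbitrary ι))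
  rw [Matrix.linfty_opNorm_def]
  rw [show ((Fintype.card ι : ℝ) * a) = ((Real.toNNReal ((Fintype.card ι : ℝ) * a) : NNReal) : ℝ) by
    rw [Real.coe_toNNReal]; positivity]
  rw [NNReal.coe_le_coe]
  apply Finset.sup_le
  intro i _
  calc ∑ j, ‖A i j‖₊ ≤ ∑ _j : ι, a.toNNReal := by
        apply Finset.sum_le_sum
        intro j _
        have h2 : ‖A i j‖ ≤ a := by rw [Real.norm_eq_abs]; exact h i j
        exact (Real.le_toNNReal_iff_coe_le ha).mpr (by rw [coe_nnnorm]; exact h2)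
    _ = (Fintype.card ι) • a.toNNReal := by simp [Finset.sum_const]
    _ ≤ _ := by
        rw [Real.toNNReal_mul (by positivity)]
        simp [nsmul_eq_mul]


theorem arith1 {x e pk : ℝ} (hx : 0 ≤ x) (he : 0 ≤ e) (hele : e ≤ x)
    (hP : pk ≤ x^2) : (x+e)^2 + pk ≤ 5*x^2 := by
  nlinarith [mul_nonneg (sub_nonneg.mpr hele) (by linarith : (0:ℝ) ≤ 3*x+e)]

set_option maxHeartbeats 1600000 in
/-- Lemma 4.2: with `γ ≥ (1/4) n^{-1/ρ} 3^{-(2n+1)d/ρ} κ^{1/ρ}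
L₀^{-(2p^{(n)}+(2n+1)d)/ρ}` and `τ_n > (2p^{(n)}+(2n+1)d)/ρ`, there exists `L̄₀*` such
that for `L₀ ≥ L̄₀*` there is `ḡ₀*` so that for `|g| > ḡ₀*`, every `(E,γ)`-Good cube
`Λ_{L₀}(u)` is `(E,1/2)`-NS. -/
theorem statement15 {d N : ℕ} (hd : 1 ≤ d) (hN : 2 ≤ N)
    (n : ℕ) (hn1 : 1 ≤ n) (hnN : n ≤ N)
    (U : Pt d → Pt d → ℝ) (r0 : ℕ) (hr0 : 1 ≤ r0) (M M1 : ℝ) (hM : 0 < M)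
    (hUbdd : ∀ x x', |U x x'| ≤ M1) (hUsym : ∀ x x', U x x' = U x' x)
    (hUfin : ∀ x x', (r0 : ℕ) ≤ ptNorm (x - x') → U x x' = 0)
    (ρ κ : ℝ) (hρ : 0 < ρ) (hκ : 0 < κ)
    (r C0 : ℝ) (hC0 : 0 < C0)
    (p0 : ℝ) (hp0 : 20 * N * d ≤ p0)
    (τ s0 rn : ℝ)
    (hs0 : (n * d : ℝ) / 2 < s0) (hs0rn : s0 ≤ rn) (hrnr : rn < r - (n * d : ℝ) / 2)
    (hτ : (2 * pexp N p0 n + ((2 * n + 1) * d : ℕ)) / ρ < τ) :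
    ∃ L0bar : ℝ, 0 < L0bar ∧
      ∀ L0 : ℕ, L0bar ≤ (L0 : ℝ) →
        ∀ γ : ℝ,
          1 / 4 * (n : ℝ) ^ (-(1 / ρ)) * (3 : ℝ) ^ (-(((2 * n + 1) * d : ℕ) : ℝ) / ρ) *
              κ ^ (1 / ρ) *
              (L0 : ℝ) ^ (-(2 * pexp N p0 n + ((2 * n + 1) * d : ℕ)) / ρ) ≤ γ →
          ∃ gbar : ℝ, 0 < gbar ∧
            ∀ g : ℝ, gbar < |g| →
              ∀ v : Pt d → ℝ, (∀ a, |v a| ≤ M) →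
                ∀ E ∈ Ibox M N, ∀ u : Cfg n d,
                  (∀ x ∈ cube L0 u, γ < |(∑ j, v (x j)) - E|) →
                  IsNS C0 τ (1/2) s0 rn L0 (cube L0 u) (ham g r U v) E := by
  classical
  -- notation
  set X : ℝ := 2 * pexp N p0 n + (((2 * n + 1) * d : ℕ) : ℝ) with hX_def
  set βx : ℝ := X / ρ with hβ_def
  have hτβ : βx < τ := hτ
  set q : ℝ := 2 * (τ - βx) with hq_def
  have hq : 0 < q := by rw [hq_def]; linarith
  have hn0 : (0:ℝ) < n := by exact_mod_cast hn1
  set c : ℝ := 1 / 4 * (n : ℝ) ^ (-(1 / ρ)) * (3 : ℝ) ^ (-(((2 * n + 1) * d : ℕ) : ℝ) / ρ) *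
      κ ^ (1 / ρ) with hc_def
  have hc : 0 < c := by rw [hc_def]; positivity
  have hnd1 : (1:ℝ) ≤ (n*d : ℝ) := by
    have : 1 ≤ n * d := Nat.one_le_iff_ne_zero.mpr (by positivity)
    exact_mod_cast this
  have hs0pos : 0 < s0 := by nlinarith
  have hrpos : 0 ≤ r := by nlinarith
  refine ⟨max 2 ((5*C0/c^2) ^ (1/q) + 1), lt_of_lt_of_le zero_lt_two (le_max_left _ _), ?_⟩
  intro L0 hL0
  have hL0two : (2:ℝ) ≤ L0 := le_trans (le_max_left _ _) hL0
  have hL0one : (1:ℝ) ≤ L0 := by linarith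
  have hL0pos : (0:ℝ) < L0 := by linarith
  have hL0q : 5*C0/c^2 ≤ (L0:ℝ)^q := by
    calc 5*C0/c^2 = ((5*C0/c^2)^(1/q))^q := by
          rw [← Real.rpow_mul (by positivity), one_div, inv_mul_cancel₀ (ne_of_gt hq),
            Real.rpow_one]
      _ ≤ (L0:ℝ)^q := by
          apply Real.rpow_le_rpow (by positivity) _ (le_of_lt hq)
          have := le_trans (le_max_right _ _) hL0
          linarith
  intro γ hγlb
  have hγlb' : c * (L0:ℝ) ^ (-βx) ≤ γ := by
    rw [hβ_def, ← neg_div]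
    exact hγlb
  have hγpos : 0 < γ := lt_of_lt_of_le (by positivity) hγlb'
  have h1γ : 1/γ ≤ (1/c) * (L0:ℝ)^βx := by
    have h2 : (0:ℝ) < c * (L0:ℝ)^(-βx) := by positivity
    calc 1/γ ≤ 1/(c * (L0:ℝ)^(-βx)) := one_div_le_one_div_of_le h2 hγlb'
      _ = (1/c) * (L0:ℝ)^βx := by
          rw [Real.rpow_neg hL0pos.le]
          field_simp
  -- constants
  set Kc : ℝ := ((2*L0+1 : ℕ) : ℝ) with hKc_def
  have hKc1 : (1:ℝ) ≤ Kc := by rw [hKc_def]; exact_mod_cast Nat.le_add_left 1 (2*L0)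
  have hKcpos : (0:ℝ) < Kc := by linarith
  set P : ℝ := (Kc^(n*d))^2 with hP_def
  have hPpos : 0 < P := by positivity
  set Krn : ℝ := Kc ^ rn with hKrn_def
  have hKrn1 : (1:ℝ) ≤ Krn := Real.one_le_rpow hKc1 (by linarith)
  set Q : ℝ := (P+1) * Krn with hQ_def
  have hQ1 : (1:ℝ) ≤ Q := by
    rw [hQ_def]
    calc (1:ℝ) = 1*1 := by ring
      _ ≤ (P+1)*Krn := mul_le_mul (by linarith only [hPpos]) hKrn1 zero_le_one
          (by linarith only [hPpos])
  set ε : ℝ := (1/γ)/Q with hε_def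
  have hεpos : 0 < ε := by positivity
  have hM1 : 0 ≤ M1 := le_trans (abs_nonneg _) (hUbdd (fun _ => 0) (fun _ => 0))
  set a : ℝ := 1 + (n:ℝ)^2 * M1 with ha_def
  have ha1 : (1:ℝ) ≤ a := by
    have h0 : 0 ≤ (n:ℝ)^2*M1 := by positivity
    rw [ha_def]; linarith only [h0]
  set θ : ℝ := min (1/2 : ℝ) (ε*γ/2) with hθ_def
  have hθpos : 0 < θ := lt_min (by norm_num) (by positivity)
  refine ⟨(Kc^(n*d) * a / γ)/θ + 1, by positivity, ?_⟩
  intro g hg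
  have hgb : (0:ℝ) ≤ (Kc^(n*d) * a / γ)/θ := by positivity
  have hgpos : 0 < |g| := lt_of_le_of_lt (by linarith) hg
  have hgne : g ≠ 0 := fun h => by rw [h, abs_zero] at hgpos; exact lt_irrefl 0 hgpos
  have hgkey : Kc^(n*d) * (a/|g|) ≤ γ * θ := by
    have h1 : (Kc^(n*d) * a / γ)/θ < |g| := lt_of_le_of_lt (by linarith) hg
    rw [div_lt_iff₀ hθpos] at h1
    rw [div_lt_iff₀ hγpos] at h1
    rw [show Kc^(n*d) * (a/|g|) = Kc^(n*d) * a/|g| from (mul_div_assoc _ _ _).symm]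
    rw [div_le_iff₀ hgpos]
    rw [show γ * θ * |g| = |g| * θ * γ by ring]
    exact h1.le
  intro v hv E hE u hGood
  set Λ : Finset (Cfg n d) := cube L0 u with hΛ_def
  have huΛ : u ∈ Λ := mem_cube_self L0 u
  haveI : Nonempty {x // x ∈ Λ} := ⟨⟨u, huΛ⟩⟩
  have hcard : ((Fintype.card {x // x ∈ Λ} : ℕ) : ℝ) = Kc^(n*d) := by
    rw [Fintype.card_coe, hΛ_def, cube_card, hKc_def]
    push_cast
    ring
  set Dv : {x // x ∈ Λ} → ℝ := fun x => (∑ j, v (x.1 j)) - E with hDv_def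
  set A' : Matrix {x // x ∈ Λ} {x // x ∈ Λ} ℝ :=
    fun x y => (1/g) * (hopT r x.1 y.1 + if x.1 = y.1 then pairU U x.1 else 0) with hA'_def
  have hA'entry : ∀ x y, |A' x y| ≤ a/|g| := by
    intro x y
    have h1 : |hopT r x.1 y.1 + if x.1 = y.1 then pairU U x.1 else 0| ≤ a := by
      apply le_trans (abs_add_le _ _)
      have h2 : |hopT r x.1 y.1| ≤ 1 := by
        rw [abs_of_nonneg (hopT_nonneg r _ _)]
        exact hopT_le_one hrpos _ _
      have h3 : |if x.1 = y.1 then pairU U x.1 else 0| ≤ (n:ℝ)^2 * M1 := by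
        split
        · exact pairU_abs_le U M1 hUbdd _
        · rw [abs_zero]; positivity
      rw [ha_def]; linarith
    calc |A' x y| = (1/|g|) * |hopT r x.1 y.1 + if x.1 = y.1 then pairU U x.1 else 0| := by
          rw [hA'_def]
          rw [abs_mul, abs_div, abs_one]
      _ ≤ (1/|g|) * a := by
          apply mul_le_mul_of_nonneg_left h1 (by positivity)
      _ = a/|g| := by ring
  have hA'norm : ‖A'‖ ≤ γ * θ := by
    calc ‖A'‖ ≤ ((Fintype.card {x // x ∈ Λ} : ℕ) : ℝ) * (a/|g|) :=
          norm_le_of_entries A' _ hA'entry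
      _ = Kc^(n*d) * (a/|g|) := by rw [hcard]
      _ ≤ γ * θ := hgkey
  have hDvbound : ∀ i : {x // x ∈ Λ}, γ ≤ |Dv i| := fun i => le_of_lt (hGood i.1 i.2)
  obtain ⟨Y, hY1, hY2, hYentry⟩ := neumann Dv A' γ ε hγpos hεpos hDvbound (by rw [← hθ_def]; exact hA'norm)
  -- the Green kernel
  set Gk : Cfg n d → Cfg n d → ℝ :=
    fun x y => if h : x ∈ Λ ∧ y ∈ Λ then Y ⟨x,h.1⟩ ⟨y,h.2⟩ else 0 with hGk_def
  -- Hamiltonian entries match diagonal Dv + A'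
  have hham : ∀ (x z : {w // w ∈ Λ}),
      ham g r U v x.1 z.1 - (if x.1 = z.1 then E else 0) = (Matrix.diagonal Dv + A') x z := by
    intro x z
    rcases eq_or_ne x.1 z.1 with hxz | hxz
    · have hxz' : x = z := Subtype.ext hxz
      subst hxz'
      rw [Matrix.add_apply, Matrix.diagonal_apply_eq]
      simp only [ham, Matrix.add_apply, Matrix.diagonal_apply_eq, hA'_def, hDv_def, if_pos rfl]
      norm_num
      ring
    · have hxz' : x ≠ z := fun h => hxz (congrArg Subtype.val h)
      rw [Matrix.add_apply, Matrix.diagonal_apply_ne _ hxz']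
      simp only [ham, Matrix.add_apply, Matrix.diagonal_apply_ne _ hxz', hA'_def, hDv_def,
        if_neg hxz]
      ring
  have hGkmem : ∀ (x y : Cfg n d) (hx : x ∈ Λ) (hy : y ∈ Λ), Gk x y = Y ⟨x,hx⟩ ⟨y,hy⟩ := by
    intro x y hx hy
    simp only [hGk_def]
    exact dif_pos ⟨hx, hy⟩
  refine ⟨Gk, ⟨?_, ?_, ?_⟩, ?_⟩
  · -- zero outside
    intro x y hxy
    simp only [hGk_def]
    exact dif_neg (by tauto)
  · -- left inverse
    intro x hx y hy
    have key := congrArg (fun (W : Matrix {w // w ∈ Λ} {w // w ∈ Λ} ℝ) => W ⟨x,hx⟩ ⟨y,hy⟩) hY1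
    simp only [Matrix.mul_apply, Matrix.one_apply] at key
    rw [← Finset.sum_attach Λ (fun z => (ham g r U v x z - if x = z then E else 0) * Gk z y)]
    have hterm : ∀ z : {w // w ∈ Λ},
        (ham g r U v x z.1 - if x = z.1 then E else 0) * Gk z.1 y
          = (Matrix.diagonal Dv + A') ⟨x,hx⟩ z * Y z ⟨y,hy⟩ := by
      intro z
      rw [hGkmem z.1 y z.2 hy, hham ⟨x,hx⟩ z]
    calc ∑ z ∈ Λ.attach, (ham g r U v x z.1 - if x = z.1 then E else 0) * Gk z.1 y
        = ∑ z ∈ Λ.attach, (Matrix.diagonal Dv + A') ⟨x,hx⟩ z * Y z ⟨y,hy⟩ :=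
          Finset.sum_congr rfl (fun z _ => hterm z)
      _ = ∑ z : {w // w ∈ Λ}, (Matrix.diagonal Dv + A') ⟨x,hx⟩ z * Y z ⟨y,hy⟩ := by
          rw [← Finset.univ_eq_attach]
      _ = if x = y then 1 else 0 := by
          rw [key]
          simp [Subtype.ext_iff]
  · -- right inverse
    intro x hx y hy
    have key := congrArg (fun (W : Matrix {w // w ∈ Λ} {w // w ∈ Λ} ℝ) => W ⟨x,hx⟩ ⟨y,hy⟩) hY2
    simp only [Matrix.mul_apply, Matrix.one_apply] at key
    rw [← Finset.sum_attach Λ (fun z => Gk x z * (ham g r U v z y - if z = y then E else 0))]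
    have hterm : ∀ z : {w // w ∈ Λ},
        Gk x z.1 * (ham g r U v z.1 y - if z.1 = y then E else 0)
          = Y ⟨x,hx⟩ z * (Matrix.diagonal Dv + A') z ⟨y,hy⟩ := by
      intro z
      rw [hGkmem x z.1 hx z.2, hham z ⟨y,hy⟩]
    calc ∑ z ∈ Λ.attach, Gk x z.1 * (ham g r U v z.1 y - if z.1 = y then E else 0)
        = ∑ z ∈ Λ.attach, Y ⟨x,hx⟩ z * (Matrix.diagonal Dv + A') z ⟨y,hy⟩ :=
          Finset.sum_congr rfl (fun z _ => hterm z)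
      _ = ∑ z : {w // w ∈ Λ}, Y ⟨x,hx⟩ z * (Matrix.diagonal Dv + A') z ⟨y,hy⟩ := by
          rw [← Finset.univ_eq_attach]
      _ = if x = y then 1 else 0 := by
          rw [key]
          simp [Subtype.ext_iff]
  · -- Sobolev norm bound
    intro s hs1 hs2
    have hspos : 0 < s := lt_of_lt_of_le hs0pos hs1
    -- entry bounds for Gk
    have hGdiag : ∀ x : Cfg n d, ∀ hx : x ∈ Λ, |Gk x x| ≤ 1/γ + ε := by
      intro x hx
      rw [hGkmem x x hx hx]
      have h1 := hYentry ⟨x,hx⟩ ⟨x,hx⟩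
      rw [if_pos rfl] at h1
      have h2 : |(Dv ⟨x,hx⟩)⁻¹| ≤ 1/γ := by
        rw [abs_inv, one_div]
        exact inv_anti₀ hγpos (hDvbound ⟨x,hx⟩)
      calc |Y ⟨x,hx⟩ ⟨x,hx⟩| ≤ |(Dv ⟨x,hx⟩)⁻¹| + |Y ⟨x,hx⟩ ⟨x,hx⟩ - (Dv ⟨x,hx⟩)⁻¹| :=
            sub_le_iff_le_add'.mp (abs_sub_abs_le_abs_sub _ _)
        _ ≤ 1/γ + ε := add_le_add h2 h1
    have hGoff : ∀ x y : Cfg n d, ∀ hx : x ∈ Λ, ∀ hy : y ∈ Λ, x ≠ y → |Gk x y| ≤ ε := by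
      intro x y hx hy hxy
      rw [hGkmem x y hx hy]
      have h1 := hYentry ⟨x,hx⟩ ⟨y,hy⟩
      rw [if_neg (fun h => hxy (congrArg Subtype.val h)), sub_zero] at h1
      exact h1
    -- jap powers
    have hKrn2pos : (0:ℝ) < Kc^(2*rn) := Real.rpow_pos_of_pos hKcpos _
    -- sqrt manipulation
    have hRpos : (0:ℝ) < (L0:ℝ)^(τ + 1/2*s) := Real.rpow_pos_of_pos hL0pos _
    unfold sobNorm
    rw [show (L0:ℝ)^(τ + 1/2*s) = Real.sqrt (((L0:ℝ)^(τ + 1/2*s))^2) from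
      (Real.sqrt_sq hRpos.le).symm]
    apply Real.sqrt_le_sqrt
    set diffs := (Λ ×ˢ Λ).image (fun p : Cfg n d × Cfg n d => p.1 - p.2) with hdiffs_def
    have hterm : ∀ w ∈ diffs,
        ((((Λ ×ˢ Λ).filter (fun p : Cfg n d × Cfg n d => p.1 - p.2 = w)).sup
            (fun p => ‖Gk p.1 p.2‖₊) : NNReal) : ℝ) ^ 2 * ((jap w : ℕ) : ℝ) ^ (2 * s)
          ≤ (if w = 0 then (1/γ+ε)^2 else 0) + ε^2 * Kc^(2*rn) := by
      intro w hw
      obtain ⟨p, hpmem, hpw⟩ := Finset.mem_image.mp hw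
      obtain ⟨hp1, hp2⟩ := Finset.mem_product.mp hpmem
      rcases eq_or_ne w 0 with hw0 | hw0
      · -- diagonal
        subst hw0
        have hsup : ((((Λ ×ˢ Λ).filter (fun p : Cfg n d × Cfg n d => p.1 - p.2 = 0)).sup
            (fun p => ‖Gk p.1 p.2‖₊) : NNReal) : ℝ) ≤ 1/γ + ε := by
          apply coe_sup_nnnorm_le _ _ _ (by positivity)
          intro p hp
          obtain ⟨hpm, hpe⟩ := Finset.mem_filter.mp hp
          obtain ⟨hq1, hq2⟩ := Finset.mem_product.mp hpm
          have : p.1 = p.2 := sub_eq_zero.mp hpe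
          rw [this]
          exact hGdiag p.2 hq2
        rw [if_pos rfl]
        have hjap : ((jap (0 : Cfg n d) : ℕ) : ℝ) ^ (2*s) = 1 := by
          rw [jap_zero]; simp
        rw [hjap, mul_one]
        have h2 : ((((Λ ×ˢ Λ).filter (fun p : Cfg n d × Cfg n d => p.1 - p.2 = 0)).sup
            (fun p => ‖Gk p.1 p.2‖₊) : NNReal) : ℝ) ^ 2 ≤ (1/γ+ε)^2 :=
          pow_le_pow_left₀ (by positivity) hsup 2
        exact h2.trans (le_add_of_nonneg_right (by positivity))
      · -- off-diagonal
        rw [if_neg hw0, zero_add]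
        have hsup : ((((Λ ×ˢ Λ).filter (fun p : Cfg n d × Cfg n d => p.1 - p.2 = w)).sup
            (fun p => ‖Gk p.1 p.2‖₊) : NNReal) : ℝ) ≤ ε := by
          apply coe_sup_nnnorm_le _ _ _ hεpos.le
          intro p hp
          obtain ⟨hpm, hpe⟩ := Finset.mem_filter.mp hp
          obtain ⟨hq1, hq2⟩ := Finset.mem_product.mp hpm
          have hne : p.1 ≠ p.2 := fun h => hw0 (by rw [← hpe, h, sub_self])
          exact hGoff p.1 p.2 hq1 hq2 hne
        have hjapb : ((jap w : ℕ) : ℝ) ^ (2*s) ≤ Kc^(2*rn) := by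
          have hj1 : ((jap w : ℕ) : ℝ) ≤ Kc := by
            rw [← hpw, hKc_def]
            exact jap_sub_le hp1 hp2
          have hj0 : (0:ℝ) ≤ ((jap w : ℕ) : ℝ) := by positivity
          calc ((jap w : ℕ) : ℝ) ^ (2*s) ≤ Kc ^ (2*s) :=
                Real.rpow_le_rpow hj0 hj1 (by positivity)
            _ ≤ Kc^(2*rn) := Real.rpow_le_rpow_of_exponent_le hKc1 (by linarith)
        apply mul_le_mul (pow_le_pow_left₀ (by positivity) hsup 2) hjapb (by positivity)
          (by positivity)
    calc C0 * ∑ w ∈ diffs,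
          ((((Λ ×ˢ Λ).filter (fun p : Cfg n d × Cfg n d => p.1 - p.2 = w)).sup
              (fun p => ‖Gk p.1 p.2‖₊) : NNReal) : ℝ) ^ 2 * ((jap w : ℕ) : ℝ) ^ (2 * s)
        ≤ C0 * ∑ w ∈ diffs, ((if w = 0 then (1/γ+ε)^2 else 0) + ε^2 * Kc^(2*rn)) := by
          apply mul_le_mul_of_nonneg_left (Finset.sum_le_sum hterm) hC0.le
      _ = C0 * ((if (0 : Cfg n d) ∈ diffs then (1/γ+ε)^2 else 0)
            + diffs.card * (ε^2 * Kc^(2*rn))) := by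
          rw [Finset.sum_add_distrib, Finset.sum_ite_eq' diffs 0 (fun _ => (1/γ+ε)^2),
            Finset.sum_const, nsmul_eq_mul]
      _ ≤ C0 * ((1/γ+ε)^2 + P * (ε^2 * Kc^(2*rn))) := by
          apply mul_le_mul_of_nonneg_left _ hC0.le
          apply add_le_add
          · split
            · exact le_refl _
            · positivity
          · apply mul_le_mul_of_nonneg_right _ (by positivity)
            have h1 : (diffs.card : ℝ) ≤ P := by
              rw [hP_def]
              have h2 : diffs.card ≤ (Λ ×ˢ Λ).card := Finset.card_image_le
              rw [Finset.card_product, hΛ_def, cube_card] at h2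
              have h3 : ((diffs.card : ℕ) : ℝ) ≤ (((2*L0+1)^(n*d) * (2*L0+1)^(n*d) : ℕ) : ℝ) := by
                exact_mod_cast h2
              rw [hKc_def]
              push_cast at h3 ⊢
              exact h3.trans (le_of_eq (pow_two _).symm)
            exact h1
      _ ≤ C0 * (5 * (1/γ)^2) := by
          apply mul_le_mul_of_nonneg_left _ hC0.le
          have hεle : ε ≤ 1/γ := by
            rw [hε_def]
            exact div_le_self (by positivity) hQ1
          have hPterm : P * (ε^2 * Kc^(2*rn)) ≤ (1/γ)^2 := by
            have hKrnsq : Krn^2 = Kc^(2*rn) := by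
              rw [hKrn_def, ← Real.rpow_natCast (Kc ^ rn) 2, ← Real.rpow_mul hKcpos.le]
              norm_num
              rw [mul_comm]
            have hQsq : Q^2 = (P+1)^2 * Kc^(2*rn) := by
              rw [hQ_def, mul_pow, hKrnsq]
            have hεsq : ε^2 = (1/γ)^2 / Q^2 := by rw [hε_def, div_pow]
            rw [hεsq, hQsq]
            rw [div_eq_mul_inv, mul_inv]
            have hexp : P * ((1/γ)^2 * (((P+1)^2)⁻¹ * (Kc^(2*rn))⁻¹) * Kc^(2*rn))
                = (P / (P+1)^2) * (1/γ)^2 := by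
              field_simp
            rw [hexp]
            have hfrac : P / (P+1)^2 ≤ 1 := by
              rw [div_le_one (by positivity)]
              calc P ≤ P + (P^2 + P + 1) := le_add_of_nonneg_right (by positivity)
                _ = (P+1)^2 := by ring
            exact mul_le_of_le_one_left (sq_nonneg _) hfrac
          exact arith1 (by positivity : (0:ℝ) ≤ 1/γ) hεpos.le hεle hPterm
      _ ≤ ((L0:ℝ)^(τ + 1/2*s))^2 := by
          have h1 : (1/γ)^2 ≤ (1/c)^2 * ((L0:ℝ)^βx)^2 := by
            have := pow_le_pow_left₀ (by positivity : (0:ℝ) ≤ 1/γ) h1γ 2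
            rw [mul_pow] at this
            exact this
          have hβsq : ((L0:ℝ)^βx)^2 = (L0:ℝ)^(2*βx) := by
            rw [← Real.rpow_natCast ((L0:ℝ) ^ βx) 2, ← Real.rpow_mul hL0pos.le]
            norm_num
            rw [mul_comm]
          have h2 : C0 * (5 * (1/γ)^2) ≤ (5*C0/c^2) * (L0:ℝ)^(2*βx) := by
            rw [← hβsq]
            have h2' := mul_le_mul_of_nonneg_left h1 (by positivity : (0:ℝ) ≤ 5*C0)
            calc C0*(5*(1/γ)^2) = 5*C0*((1/γ)^2) := by ring
              _ ≤ 5*C0*((1/c)^2*((L0:ℝ)^βx)^2) := h2'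
              _ = (5*C0/c^2) * ((L0:ℝ)^βx)^2 := by field_simp
          have h3 : (5*C0/c^2) * (L0:ℝ)^(2*βx) ≤ (L0:ℝ)^q * (L0:ℝ)^(2*βx) := by
            apply mul_le_mul_of_nonneg_right hL0q (by positivity)
          have h4 : (L0:ℝ)^q * (L0:ℝ)^(2*βx) = (L0:ℝ)^(2*τ) := by
            rw [← Real.rpow_add hL0pos]
            congr 1
            rw [hq_def]; ring
          have h5 : (L0:ℝ)^(2*τ) ≤ (L0:ℝ)^(2*τ + s) :=
            Real.rpow_le_rpow_of_exponent_le hL0one (by linarith)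
          have h6 : ((L0:ℝ)^(τ + 1/2*s))^2 = (L0:ℝ)^(2*τ + s) := by
            rw [← Real.rpow_natCast ((L0:ℝ) ^ (τ + 1/2*s)) 2, ← Real.rpow_mul hL0pos.le]
            congr 1
            push_cast
            ring
          rw [h6]
          linarith only [h2, h3, h4, h5]

end MP
end
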